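/- Let H be a connected Γ-graded algebra over a field k, let {z_ξ}_{ξ∈Ξ} be a family of homogeneous elements of H_+, and let ◁ be a total order on Ξ whose restriction to {ξ ∈ Ξ : deg(z_ξ) = γ} is well-founded for each γ ∈ Γ. Then the partial orders ◁_L and ◁_R on P(Ξ) are both well-founded. -/

import Mathlib

open scoped TensorProduct
open Classical

noncomputable section

namespace AdamsPaper

variable {k : Type*} [Field k] {σ : Type*} {H : Type*}

/-- A connected `Γ`-graded algebra structure, `Γ = σ →₀ ℕ` a free abelian monoid. -/
def IsConnGradedAlg [Nonempty σ] [DecidableEq σ] [Ring H] [Algebra k H]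
    (𝒜 : (σ →₀ ℕ) → Submodule k H) : Prop :=
  DirectSum.IsInternal 𝒜 ∧ (1 : H) ∈ 𝒜 0 ∧
    (∀ α β : σ →₀ ℕ, ∀ x ∈ 𝒜 α, ∀ y ∈ 𝒜 β, x * y ∈ 𝒜 (α + β)) ∧
    Module.finrank k (𝒜 0) = 1

/-- A connected `Γ`-graded Hopf algebra: the grading is compatible with all structure maps. -/
def IsConnGradedHopf [Nonempty σ] [DecidableEq σ] [Ring H] [HopfAlgebra k H]
    (𝒜 : (σ →₀ ℕ) → Submodule k H) : Prop :=
  IsConnGradedAlg (k := k) 𝒜 ∧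
    (∀ γ : σ →₀ ℕ, ∀ x ∈ 𝒜 γ,
      Coalgebra.comul (R := k) x ∈
        ⨆ p : {p : (σ →₀ ℕ) × (σ →₀ ℕ) // p.1 + p.2 = γ},
          LinearMap.range (TensorProduct.mapIncl (𝒜 p.1.1) (𝒜 p.1.2))) ∧
    (∀ γ : σ →₀ ℕ, γ ≠ 0 → ∀ x ∈ 𝒜 γ, Coalgebra.counit (R := k) x = 0)

/-- Convolution product of linear endomorphisms of a bialgebra. -/
def conv [Ring H] [Bialgebra k H] (f g : H →ₗ[k] H) : H →ₗ[k] H :=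
  LinearMap.mul' k H ∘ₗ TensorProduct.map f g ∘ₗ Coalgebra.comul (R := k)

/-- The convolution unit `η ∘ ε`. -/
def convOne [Ring H] [Bialgebra k H] : H →ₗ[k] H :=
  Algebra.linearMap k H ∘ₗ Coalgebra.counit (R := k)

/-- Convolution powers. -/
def convPow [Ring H] [Bialgebra k H] (f : H →ₗ[k] H) : ℕ → (H →ₗ[k] H)
  | 0 => convOne
  | n + 1 => conv f (convPow f n)

/-- The Adams operators `Ψ_n`, `n ∈ ℤ`: convolution powers of the identity for `n ≥ 0`,
convolution powers of the antipode for `n < 0`. -/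
def adams [Ring H] [HopfAlgebra k H] (n : ℤ) : H →ₗ[k] H :=
  if 0 ≤ n then convPow (LinearMap.id : H →ₗ[k] H) n.toNat
  else convPow (HopfAlgebra.antipode (R := k) (A := H)) (-n).toNat

variable {Ξ : Type*}

/-- `z_V`, the ordered product of the family along a finite sequence `V`. -/
def zProd [Ring H] (z : Ξ → H) (V : List Ξ) : H := (V.map z).prod

/-- `|V|`, the degree of a finite sequence. -/
def degList (d : Ξ → σ →₀ ℕ) (V : List Ξ) : σ →₀ ℕ := (V.map d).sum

/-- The number of occurrences of `ξ` in `V`. -/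
def cnt (V : List Ξ) (ξ : Ξ) : ℕ := (V.map fun a => if a = ξ then 1 else 0).sum

/-- `V ∈ P(Ξ,◁,h)`: `V` is nondecreasing with respect to `◁` and each element occurs
fewer than `h ξ` times. -/
def Adm (lt : Ξ → Ξ → Prop) (h : Ξ → ℕ∞) (V : List Ξ) : Prop :=
  V.Chain' (fun a b => lt a b ∨ a = b) ∧ ∀ ξ : Ξ, (cnt V ξ : ℕ∞) < h ξ

/-- The subspace `H[ξ,◁,h]`: the span of the `z_V` with `V ∈ P(Ξ,◁,h)` whose last entry
is `◁ ξ`. -/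
def Hspan [Ring H] [Algebra k H] (z : Ξ → H) (lt : Ξ → Ξ → Prop) (h : Ξ → ℕ∞)
    (ξ : Ξ) : Submodule k H :=
  Submodule.span k {x : H | ∃ V : List Ξ, Adm lt h V ∧ (∀ ν ∈ V.getLast?, lt ν ξ) ∧
    x = zProd z V}

/-- `A_+`, the span of the components of nonzero degree of a (homogeneous) subspace `A`. -/
def posPart [Ring H] [Algebra k H] (𝒜 : (σ →₀ ℕ) → Submodule k H)
    (A : Submodule k H) : Submodule k H :=
  ⨆ γ : {γ : σ →₀ ℕ // γ ≠ 0}, A ⊓ 𝒜 γ.1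

/-- Comparison of two finite sequences of the same degree, reading from the left. -/
def ltFromLeft (lt : Ξ → Ξ → Prop) (U V : List Ξ) : Prop :=
  ∃ l : ℕ, 1 ≤ l ∧ l ≤ min U.length V.length ∧
    (∀ i : ℕ, i + 1 < l → U[i]? = V[i]?) ∧
    ∃ a b, U[l - 1]? = some a ∧ V[l - 1]? = some b ∧ lt a b

/-- The order `◁_L` on finite sequences. -/
def ltL (d : Ξ → σ →₀ ℕ) (lt : Ξ → Ξ → Prop) (U V : List Ξ) : Prop :=
  (∃ γ : σ →₀ ℕ, γ ≠ 0 ∧ degList d U + γ = degList d V) ∨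
    (degList d U = degList d V ∧ ltFromLeft lt U V)

/-- The order `◁_R` on finite sequences. -/
def ltR (d : Ξ → σ →₀ ℕ) (lt : Ξ → Ξ → Prop) (U V : List Ξ) : Prop :=
  (∃ γ : σ →₀ ℕ, γ ≠ 0 ∧ degList d U + γ = degList d V) ∨
    (degList d U = degList d V ∧ ltFromLeft lt U.reverse V.reverse)

end AdamsPaper

end

namespace AdamsPaper


section Aux

variable {σ : Type*} [DecidableEq σ] {Ξ : Type*} [LinearOrder Ξ]

private lemma no_desc {α : Type*} {r : α → α → Prop} (h : WellFounded r)
    (f : ℕ → α) (hf : ∀ n, r (f (n + 1)) (f n)) : False :=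
  (fun x => h.induction (C := fun x => (∃ n, f n = x) → False) x
    (fun _ ih => fun ⟨n, hn⟩ => ih (f (n + 1)) (hn ▸ hf n) ⟨n + 1, rfl⟩)) (f 0) ⟨0, rfl⟩

private def wt (γ : σ →₀ ℕ) : ℕ := γ.sum fun _ n => n

private lemma wt_add (α β : σ →₀ ℕ) : wt (α + β) = wt α + wt β :=
  Finsupp.sum_add_index' (fun _ => rfl) (fun _ _ _ => rfl)

private lemma wt_pos {γ : σ →₀ ℕ} (h : γ ≠ 0) : 1 ≤ wt γ := by
  obtain ⟨a, ha⟩ := Finsupp.ne_iff.mp h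
  have ha0 : γ a ≠ 0 := by simpa using ha
  calc 1 ≤ γ a := Nat.one_le_iff_ne_zero.mpr ha0
    _ ≤ wt γ := Finset.single_le_sum (fun _ _ => Nat.zero_le _)
        (Finsupp.mem_support_iff.mpr ha0)

private lemma mem_le_degList (d : Ξ → σ →₀ ℕ) {ξ : Ξ} {V : List Ξ} (h : ξ ∈ V) :
    d ξ ≤ degList d V :=
  List.le_sum_of_mem (List.mem_map_of_mem (f := d) h)

private lemma length_le_wt (d : Ξ → σ →₀ ℕ) (hd : ∀ ξ, d ξ ≠ 0) (V : List Ξ) :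
    V.length ≤ wt (degList d V) := by
  induction V with
  | nil => simp
  | cons a V ih =>
    have h1 : degList d (a :: V) = d a + degList d V := by simp [degList]
    have h2 := wt_pos (hd a)
    rw [h1, wt_add]
    simp only [List.length_cons]
    omega

private lemma degList_reverse (d : Ξ → σ →₀ ℕ) (V : List Ξ) :
    degList d V.reverse = degList d V := by
  simp [degList, List.map_reverse, List.sum_reverse]

private lemma sliceWF (d : Ξ → σ →₀ ℕ)
    (hwf : ∀ γ : σ →₀ ℕ, WellFounded (fun a b : {ξ : Ξ // d ξ = γ} => a.1 < b.1))
    (γ : σ →₀ ℕ) :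
    WellFounded (fun a b : {ξ : Ξ // d ξ ≤ γ} => a.1 < b.1) := by
  haveI : IsStrictOrder {ξ : Ξ // d ξ ≤ γ} (fun a b => a.1 < b.1) :=
    { irrefl := fun a => lt_irrefl a.1, trans := fun _ _ _ => lt_trans }
  rw [RelEmbedding.wellFounded_iff_isEmpty]
  by_contra h
  rw [not_isEmpty_iff] at h
  obtain ⟨g⟩ := h
  have hdesc : ∀ n, (g (n + 1)).1 < (g n).1 := fun n => g.map_rel_iff.mpr (Nat.lt_succ_self n)
  by_cases hfin : ∀ δ ∈ Set.Iic γ, {m : ℕ | d (g m).1 = δ}.Finite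
  · have hU : (⋃ δ ∈ Set.Iic γ, {m : ℕ | d (g m).1 = δ}).Finite :=
      Set.Finite.biUnion (Set.finite_Iic γ) hfin
    exact Set.infinite_univ (hU.subset fun n _ => Set.mem_biUnion (g n).2 rfl)
  · push_neg at hfin
    obtain ⟨δ, hδγ, hinf⟩ := hfin
    have hp : {m : ℕ | d (g m).1 = δ}.Infinite := hinf
    have hanti : StrictAnti fun n => (g n).1 := strictAnti_nat_of_succ_lt hdesc
    refine no_desc (hwf δ)
      (fun k => ⟨(g (Nat.nth (fun m => d (g m).1 = δ) k)).1,
        Nat.nth_mem_of_infinite hp k⟩) (fun k => ?_)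
    exact hanti (Nat.nth_strictMono hp (Nat.lt_succ_self k))

private lemma fiberWF (d : Ξ → σ →₀ ℕ) (hd : ∀ ξ, d ξ ≠ 0)
    (hwf : ∀ γ : σ →₀ ℕ, WellFounded (fun a b : {ξ : Ξ // d ξ = γ} => a.1 < b.1))
    (γ : σ →₀ ℕ) :
    WellFounded (fun U V : {V : List Ξ // degList d V = γ} =>
      ltFromLeft (· < ·) U.1 V.1) := by
  haveI : WellFoundedLT {ξ : Ξ // d ξ ≤ γ} := ⟨sliceWF d hwf γ⟩
  set E := {ξ : Ξ // d ξ ≤ γ} with hE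
  set N := wt γ with hN
  have hlen : ∀ V : {V : List Ξ // degList d V = γ}, V.1.length ≤ N := by
    intro V
    have := length_le_wt d hd V.1
    rwa [V.2] at this
  set F : {V : List Ξ // degList d V = γ} → (Fin N → WithTop E) := fun V i =>
    if h : (i : ℕ) < V.1.length
    then ((⟨V.1.get ⟨i, h⟩, le_of_le_of_eq (mem_le_degList d (V.1.get_mem _)) V.2⟩ : E) :
      WithTop E)
    else ⊤ with hF
  have hsub : ∀ U V : {V : List Ξ // degList d V = γ},
      ltFromLeft (· < ·) U.1 V.1 →
        Pi.Lex (· < ·) (@fun _ => ((· < ·) : WithTop E → WithTop E → Prop)) (F U) (F V) := by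
    intro U V hUV
    obtain ⟨l, hl1, hl2, hpre, a, b, ha, hb, hab⟩ := hUV
    have hmin := le_min_iff.mp hl2
    have hlU : l - 1 < U.1.length := by omega
    have hlV : l - 1 < V.1.length := by omega
    have hiN : l - 1 < N := lt_of_lt_of_le hlU (hlen U)
    refine ⟨⟨l - 1, hiN⟩, fun j hj => ?_, ?_⟩
    · have hjl : (j : ℕ) + 1 < l := by
        have : (j : ℕ) < l - 1 := hj
        omega
      have hjU : (j : ℕ) < U.1.length := by omega
      have hjV : (j : ℕ) < V.1.length := by omega
      have hget := hpre j hjl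
      rw [List.getElem?_eq_getElem hjU, List.getElem?_eq_getElem hjV] at hget
      have hg : U.1.get ⟨j, hjU⟩ = V.1.get ⟨j, hjV⟩ := Option.some.inj hget
      simp only [hF, dif_pos hjU, dif_pos hjV]
      exact congrArg (fun x : E => (x : WithTop E)) (Subtype.ext hg)
    · have ha' : U.1.get ⟨l - 1, hlU⟩ = a := by
        have := List.getElem?_eq_getElem hlU
        rw [this] at ha
        exact Option.some.inj ha
      have hb' : V.1.get ⟨l - 1, hlV⟩ = b := by
        have := List.getElem?_eq_getElem hlV
        rw [this] at hb
        exact Option.some.inj hb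
      simp only [hF, dif_pos hlU, dif_pos hlV]
      exact WithTop.coe_lt_coe.mpr (Subtype.mk_lt_mk.mpr (by rw [ha', hb']; exact hab))
  exact Subrelation.wf (fun {U V} h => hsub U V h)
    (InvImage.wf F (Pi.Lex.wellFounded ((· < ·) : Fin N → Fin N → Prop)
      (fun _ => (wellFounded_lt : WellFounded ((· < ·) : WithTop E → WithTop E → Prop)))))

end Aux

/-- **Lemma.** If the restriction of the total order `◁` to each set
`{ξ : deg(z_ξ) = γ}` is well-founded, then the orders `◁_L` and `◁_R` on the set of
finite sequences `P(Ξ)` are both well-founded. -/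
theorem ltL_ltR_wellFounded
    {k σ H : Type*} [Field k] [Nonempty σ] [DecidableEq σ] [Ring H] [Algebra k H]
    (𝒜 : (σ →₀ ℕ) → Submodule k H) (hH : IsConnGradedAlg (k := k) 𝒜)
    {Ξ : Type*} (z : Ξ → H) (d : Ξ → σ →₀ ℕ)
    (hz : ∀ ξ, z ξ ∈ 𝒜 (d ξ)) (hd : ∀ ξ, d ξ ≠ 0)
    (lt : Ξ → Ξ → Prop) (hlt : IsStrictTotalOrder Ξ lt)
    (hwf : ∀ γ : σ →₀ ℕ, WellFounded (fun a b : {ξ : Ξ // d ξ = γ} => lt a.1 b.1)) :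
    WellFounded (ltL d lt) ∧ WellFounded (ltR d lt) := by
  classical
  letI : DecidableRel lt := Classical.decRel lt
  haveI : IsStrictTotalOrder Ξ lt := hlt
  letI : LinearOrder Ξ := linearOrderOfSTO lt
  have hwf' : ∀ γ : σ →₀ ℕ, WellFounded (fun a b : {ξ : Ξ // d ξ = γ} => a.1 < b.1) := hwf
  have hL : WellFounded (ltL d lt) := by
    have main : ∀ γ : σ →₀ ℕ, ∀ V : List Ξ, degList d V = γ → Acc (ltL d lt) V := by
      intro γ
      induction γ using WellFoundedLT.induction with
      | _ γ ihγ =>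
        have inner : ∀ W : {V : List Ξ // degList d V = γ}, Acc (ltL d lt) W.1 := by
          intro W
          induction W using (fiberWF d hd hwf' γ).induction with
          | _ W ihW =>
            constructor
            intro U hU
            rcases hU with ⟨δ, hδ, heq⟩ | ⟨heq, hfl⟩
            · refine ihγ (degList d U) ?_ U rfl
              rw [← W.2, ← heq]
              exact lt_of_le_of_ne (self_le_add_right _ _)
                (fun h => hδ (left_eq_add.mp h))
            · exact ihW ⟨U, heq.trans W.2⟩ hfl
        intro V hV
        exact inner ⟨V, hV⟩
    exact ⟨fun V => main _ V rfl⟩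
  refine ⟨hL, ?_⟩
  have key : ∀ U V : List Ξ, ltR d lt U V → ltL d lt U.reverse V.reverse := by
    intro U V h
    rcases h with ⟨δ, hδ, heq⟩ | ⟨heq, hfl⟩
    · exact Or.inl ⟨δ, hδ, by rw [degList_reverse, degList_reverse]; exact heq⟩
    · exact Or.inr ⟨by rw [degList_reverse, degList_reverse]; exact heq, hfl⟩
  exact Subrelation.wf (fun {U V} h => key U V h) (InvImage.wf List.reverse hL)


end AdamsPaper
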